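/- Let C_* be a finitely generated free ZΓ-chain complex (Γ any group) that is ZΓ-chain homotopy equivalent to a d-dimensional free ZΓ-chain complex. Then there exists a d-dimensional ZΓ-chain subcomplex D_* ⊆ C_* such that D_* and C_* agree in dimensions ≤ d-1, D_d is a finitely generated projective direct summand of C_d, and the inclusion D_* → C_* is a ZΓ-chain homotopy equivalence. -/

import Mathlib

open CategoryTheory

section Aux

variable {R : Type} [Ring R]

theorem aux_trunc (d : ℕ) (C : ChainComplex (ModuleCat R) ℕ)
    (hproj : Module.Projective R (C.X d)) (hfg : Module.Finite R (C.X d))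
    (hdim : ∃ D' : ChainComplex (ModuleCat R) ℕ,
      (∀ n, d < n → Subsingleton (D'.X n : Type _)) ∧ Nonempty (HomotopyEquiv C D')) :
    ∃ (D : ChainComplex (ModuleCat R) ℕ) (ι : D ⟶ C),
      (∀ n, Function.Injective ⇑(ι.f n)) ∧
      (∀ n, d < n → Subsingleton (D.X n : Type _)) ∧
      (∀ n, n < d → IsIso (ι.f n)) ∧
      Module.Projective R (D.X d) ∧
      Module.Finite R (D.X d) ∧
      (∃ r : C.X d ⟶ D.X d, ι.f d ≫ r = 𝟙 (D.X d)) ∧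
      ∃ e : HomotopyEquiv D C, e.hom = ι := by
  classical
  obtain ⟨D', hD'dim, ⟨E⟩⟩ := hdim
  set h : Homotopy (E.hom ≫ E.inv) (𝟙 C) := E.homotopyHomInvId with hh
  -- the composite through the truncated complex vanishes above degree d
  have hzero : ∀ n, d < n → (E.hom ≫ E.inv).f n = 0 := by
    intro n hn
    haveI := hD'dim n hn
    apply ModuleCat.hom_ext; apply LinearMap.ext; intro x
    show E.inv.f n (E.hom.f n x) = 0
    have : E.hom.f n x = 0 := Subsingleton.elim _ _
    rw [this, map_zero]
  have hdd : ∀ (i j k : ℕ) (x : C.X i), C.d j k (C.d i j x) = 0 := by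
    intro i j k x
    exact ConcreteCategory.congr_hom (C.d_comp_d i j k) x
  set e : C.X d ⟶ C.X d := -(h.hom d (d + 1) ≫ C.d (d + 1) d) with he
  have heval : ∀ x : C.X d, e x = -(C.d (d + 1) d (h.hom d (d + 1) x)) := fun x => rfl
  -- key relation coming from the homotopy in degree d+1
  have hcomm1 := h.comm (d + 1)
  rw [hzero (d + 1) (by omega)] at hcomm1
  rw [Homotopy.dNext_succ_chainComplex, Homotopy.prevD_chainComplex] at hcomm1
  have hcomm1' : ∀ y : C.X (d + 1),
      h.hom d (d + 1) (C.d (d + 1) d y)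
        = -(C.d (d + 2) (d + 1) (h.hom (d + 1) (d + 1 + 1) y)) - y := by
    intro y
    have h0 := ConcreteCategory.congr_hom hcomm1 y
    simp only [HomologicalComplex.id_f, ConcreteCategory.comp_apply, Function.comp_apply,
      LinearMap.add_apply, LinearMap.zero_apply, LinearMap.id_apply] at h0
    have h1 : (0 : C.X (d+1)) = h.hom d (d + 1) (C.d (d + 1) d y)
        + C.d (d + 2) (d + 1) (h.hom (d + 1) (d + 1 + 1) y) + y := by
      simpa using h0
    have h2 : h.hom d (d + 1) (C.d (d + 1) d y)
        + (C.d (d + 2) (d + 1) (h.hom (d + 1) (d + 1 + 1) y) + y) = 0 := by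
      rw [← add_assoc]; exact h1.symm
    rw [eq_neg_of_add_eq_zero_left h2, neg_add, ← sub_eq_add_neg]
  -- e is the identity on boundaries
  have hc1 : ∀ y : C.X (d + 1), e (C.d (d + 1) d y) = C.d (d + 1) d y := by
    intro y
    rw [heval, hcomm1' y]
    simp [hdd]
  -- e composed with the next differential vanishes
  have hc2 : ∀ (j : ℕ) (x : C.X d), C.d d j (e x) = 0 := by
    intro j x
    rw [heval]
    simp [hdd]
  -- e is idempotent
  have hidem : ∀ x : C.X d, e (e x) = e x := by
    intro x
    conv_lhs => rw [heval x, map_neg, hc1]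
    rw [heval x]
  -- the uniform family of idempotents: 0 below d, e at d, the identity above d
  set e' : ∀ n : ℕ, C.X n ⟶ C.X n := fun n =>
    if hn : n = d then hn.symm ▸ e else if n < d then 0 else 𝟙 _ with he'
  have he'd : e' d = e := by rw [he']; simp
  have he'lt : ∀ n, n < d → e' n = 0 := by
    intro n hn
    have h1 : n ≠ d := by omega
    rw [he']; simp [h1, hn]
  have he'gt : ∀ n, d < n → e' n = 𝟙 _ := by
    intro n hn
    have h1 : n ≠ d := by omega
    have h2 : ¬ n < d := by omega
    rw [he']; simp [h1, h2]
  have hidem' : ∀ n (x : C.X n), e' n (e' n x) = e' n x := by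
    intro n x
    rcases lt_trichotomy n d with hn | hn | hn
    · rw [he'lt n hn]; rfl
    · subst hn; rw [he'd]; exact hidem x
    · rw [he'gt n hn]; rfl
  -- the submodules defining D
  set S : ∀ n : ℕ, Submodule R (C.X n) := fun n => LinearMap.ker (e' n).hom with hS
  have hres : ∀ n : ℕ, ∀ x ∈ S (n + 1), C.d (n + 1) n x ∈ S n := by
    intro n x hx
    rcases lt_trichotomy n d with hn | hn | hn
    · show C.d (n + 1) n x ∈ LinearMap.ker (e' n).hom
      rw [LinearMap.mem_ker, he'lt n hn]; rfl
    · -- n = d, so n + 1 > d : x ∈ ker id, so x = 0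
      subst hn
      have hx0 : x = 0 := by
        have := (LinearMap.mem_ker).mp hx
        rwa [he'gt (n + 1) (by omega)] at this
      rw [hx0, map_zero]
      exact (S n).zero_mem
    · have hx0 : x = 0 := by
        have := (LinearMap.mem_ker).mp hx
        rwa [he'gt (n + 1) (by omega)] at this
      rw [hx0, map_zero]
      exact (S n).zero_mem
  set D : ChainComplex (ModuleCat R) ℕ :=
    ChainComplex.of (fun n => ModuleCat.of R (S n))
      (fun n => ModuleCat.ofHom ((C.d (n + 1) n).hom.restrict (hres n)))
      (fun n => by
        apply ModuleCat.hom_ext; apply LinearMap.ext; intro x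
        apply Subtype.ext
        show C.d (n + 1) n ((C.d (n + 2) (n + 1)) x.val) = (0 : C.X n)
        exact hdd _ _ _ _) with hD
  have hDd : ∀ n, D.d (n + 1) n = ModuleCat.ofHom ((C.d (n + 1) n).hom.restrict (hres n)) :=
    fun n => ChainComplex.of_d (fun n => ModuleCat.of R (S n))
      (fun n => ModuleCat.ofHom ((C.d (n + 1) n).hom.restrict (hres n))) n
  -- the inclusion
  set ι : D ⟶ C :=
    { f := fun n => ModuleCat.ofHom (S n).subtype
      comm' := by
        intro i j hij
        obtain rfl : j + 1 = i := hij
        rw [hDd j]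
        apply ModuleCat.hom_ext; apply LinearMap.ext; intro x
        rfl } with hι
  -- the map t n : C.X n → C.X n underlying the retraction
  set t : ∀ n : ℕ, C.X n →ₗ[R] C.X n := fun n => LinearMap.id - (e' n).hom with ht
  have hteval : ∀ n (x : C.X n), t n x = x - e' n x := fun n x => rfl
  have htmem : ∀ n x, t n x ∈ S n := by
    intro n x
    show t n x ∈ LinearMap.ker (e' n).hom
    rw [LinearMap.mem_ker, hteval, map_sub, hidem', sub_self]
  -- t fixes elements of S
  have htfix : ∀ n (x : C.X n), x ∈ S n → t n x = x := by
    intro n x hx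
    have hx0 : e' n x = 0 := (LinearMap.mem_ker).mp hx
    rw [hteval, hx0, sub_zero]
  -- commutation of t with the differentials
  have hzeroapp : ∀ (a b : ℕ) (y : C.X a), (0 : C.X a ⟶ C.X b) y = 0 := fun a b y => rfl
  have htcomm : ∀ (n : ℕ) (x : C.X (n + 1)),
      C.d (n + 1) n (t (n + 1) x) = t n (C.d (n + 1) n x) := by
    intro n x
    rw [hteval, hteval, map_sub]
    congr 1
    -- reduces to commutation of e' with the differential
    rcases lt_trichotomy (n + 1) d with h1 | h1 | h1
    · rw [he'lt (n + 1) h1, he'lt n (by omega), hzeroapp, hzeroapp, map_zero]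
    · subst h1
      rw [he'd, he'lt n (by omega), hc2, hzeroapp]
    · rcases lt_trichotomy n d with h2 | h2 | h2
      · omega
      · subst h2
        rw [he'gt (n + 1) h1, he'd, hc1]
        rfl
      · rw [he'gt (n + 1) h1, he'gt n h2]
        rfl
  -- the retraction ρ : C ⟶ D
  set ρ : C ⟶ D :=
    { f := fun n => ModuleCat.ofHom ((t n).codRestrict (S n) (htmem n))
      comm' := by
        intro i j hij
        obtain rfl : j + 1 = i := hij
        rw [hDd j]
        apply ModuleCat.hom_ext; apply LinearMap.ext; intro x
        apply Subtype.ext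
        show C.d (j + 1) j (t (j + 1) x) = t j (C.d (j + 1) j x)
        exact htcomm j x } with hρ
  -- ι ≫ ρ = 𝟙 D
  have hιρ : ι ≫ ρ = 𝟙 D := by
    apply HomologicalComplex.hom_ext
    intro n
    apply ModuleCat.hom_ext; apply LinearMap.ext; intro x
    apply Subtype.ext
    show t n x.val = x.val
    exact htfix n x.val x.2
  -- the homotopy ρ ≫ ι ≃ 𝟙 C
  have hρι_f : ∀ n, (ρ ≫ ι).f n = ModuleCat.ofHom (t n) := by
    intro n
    apply ModuleCat.hom_ext; apply LinearMap.ext; intro x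
    rfl
  set K : ∀ i j : ℕ, C.X i ⟶ C.X j := fun i j => if d ≤ i then h.hom i j else 0 with hK
  have hKtop : ∀ i j, d ≤ i → K i j = h.hom i j := by intro i j hi; simp [hK, hi]
  have hKbot : ∀ i j, i < d → K i j = 0 := by
    intro i j hi
    have : ¬ d ≤ i := by omega
    simp [hK, this]
  have homK : Homotopy (ρ ≫ ι) (𝟙 C) :=
    { hom := K
      zero := by
        intro i j w
        by_cases hi : d ≤ i
        · rw [hKtop i j hi, h.zero i j w]
        · exact hKbot i j (by omega)
      comm := by
        intro i
        rw [hρι_f i, HomologicalComplex.id_f]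
        rcases lt_trichotomy i d with hi | hi | hi
        · -- degree < d : t i = id, both homotopy terms vanish
          have hd1 : dNext i K = 0 := by
            cases i with
            | zero => exact Homotopy.dNext_zero_chainComplex K
            | succ j =>
              rw [Homotopy.dNext_succ_chainComplex, hKbot j (j + 1) (by omega), Limits.comp_zero]
          have hd2 : prevD i K = 0 := by
            rw [Homotopy.prevD_chainComplex, hKbot i (i + 1) hi, Limits.zero_comp]
          rw [hd1, hd2, zero_add, zero_add]
          apply ModuleCat.hom_ext; apply LinearMap.ext; intro x
          show t i x = 𝟙 (C.X i) x
          rw [hteval, he'lt i hi, hzeroapp, sub_zero]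
          rfl
        · -- degree d
          subst hi
          have hd1 : dNext i K = 0 := by
            cases i with
            | zero => exact Homotopy.dNext_zero_chainComplex K
            | succ j =>
              rw [Homotopy.dNext_succ_chainComplex, hKbot j (j + 1) (by omega), Limits.comp_zero]
          have hd2 : prevD i K = h.hom i (i + 1) ≫ C.d (i + 1) i := by
            rw [Homotopy.prevD_chainComplex, hKtop i (i + 1) (le_refl i)]
          rw [hd1, hd2, zero_add]
          apply ModuleCat.hom_ext; apply LinearMap.ext; intro x
          show t i x = (h.hom i (i + 1) ≫ C.d (i + 1) i + 𝟙 (C.X i)) x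
          have h4 : ((h.hom i (i + 1) ≫ C.d (i + 1) i + 𝟙 (C.X i)) x : C.X i)
              = C.d (i + 1) i (h.hom i (i + 1) x) + x := rfl
          rw [h4, hteval, he'd, heval x]
          abel
        · -- degree > d : use the homotopy relation and vanishing of the composite
          obtain ⟨j, rfl⟩ : ∃ j, i = j + 1 := ⟨i - 1, by omega⟩
          have hd1 : dNext (j + 1) K = C.d (j + 1) j ≫ h.hom j (j + 1) := by
            rw [Homotopy.dNext_succ_chainComplex, hKtop j (j + 1) (by omega)]
          have hd2 : prevD (j + 1) K = h.hom (j + 1) (j + 1 + 1) ≫ C.d (j + 1 + 1) (j + 1) := by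
            rw [Homotopy.prevD_chainComplex, hKtop (j + 1) (j + 1 + 1) (by omega)]
          have hcomm := h.comm (j + 1)
          rw [hzero (j + 1) hi] at hcomm
          rw [Homotopy.dNext_succ_chainComplex, Homotopy.prevD_chainComplex,
            HomologicalComplex.id_f] at hcomm
          rw [hd1, hd2, ← hcomm]
          apply ModuleCat.hom_ext; apply LinearMap.ext; intro x
          show t (j + 1) x = 0
          rw [hteval, he'gt (j + 1) hi, ModuleCat.id_apply, sub_self] }
  -- assemble everything
  refine ⟨D, ι, ?_, ?_, ?_, ?_, ?_, ?_, ?_⟩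
  · intro n
    exact Subtype.val_injective
  · intro n hn
    refine ⟨fun a b => Subtype.ext ?_⟩
    have ha : e' n a.val = 0 := (LinearMap.mem_ker).mp a.2
    have hb : e' n b.val = 0 := (LinearMap.mem_ker).mp b.2
    rw [he'gt n hn] at ha hb
    have ha' : (a.val : C.X n) = 0 := ha
    have hb' : (b.val : C.X n) = 0 := hb
    rw [ha', hb']
  · intro n hn
    rw [ConcreteCategory.isIso_iff_bijective]
    refine ⟨Subtype.val_injective, fun x => ?_⟩
    refine ⟨⟨x, ?_⟩, rfl⟩
    show x ∈ LinearMap.ker (e' n).hom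
    rw [LinearMap.mem_ker, he'lt n hn]
    rfl
  · exact Module.Projective.of_split ((S d).subtype)
      ((t d).codRestrict (S d) (htmem d))
      (by
        apply LinearMap.ext; intro x
        apply Subtype.ext
        show t d x.val = x.val
        exact htfix d x.val x.2)
  · refine Module.Finite.of_surjective
      ((t d).codRestrict (S d) (htmem d)) (fun x => ⟨x.val, ?_⟩)
    apply Subtype.ext
    show t d x.val = x.val
    exact htfix d x.val x.2
  · refine ⟨ρ.f d, ?_⟩
    apply ModuleCat.hom_ext; apply LinearMap.ext; intro x
    apply Subtype.ext
    show t d x.val = x.val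
    exact htfix d x.val x.2
  · exact ⟨⟨ι, ρ, Homotopy.ofEq hιρ, homK⟩, rfl⟩

end Aux

/-- Let `C_*` be a finitely generated free `ℤΓ`-chain complex which is
`ℤΓ`-chain homotopy equivalent to a `d`-dimensional free `ℤΓ`-chain complex.  Then there is a
`d`-dimensional subcomplex `D_* ⊆ C_*` agreeing with `C_*` in dimensions `≤ d-1`, with `D_d` a
finitely generated projective direct summand of `C_d`, such that the inclusion `D_* → C_*` is a
`ℤΓ`-chain homotopy equivalence. -/
theorem stmt_19 (Γ : Type) [Group Γ] (d : ℕ)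
    (C : ChainComplex (ModuleCat (MonoidAlgebra ℤ Γ)) ℕ)
    (hfree : ∀ n, Module.Free (MonoidAlgebra ℤ Γ) (C.X n))
    (hfg : ∀ n, Module.Finite (MonoidAlgebra ℤ Γ) (C.X n))
    (hdim : ∃ D' : ChainComplex (ModuleCat (MonoidAlgebra ℤ Γ)) ℕ,
      (∀ n, Module.Free (MonoidAlgebra ℤ Γ) (D'.X n)) ∧
      (∀ n, d < n → Subsingleton (D'.X n : Type _)) ∧ Nonempty (HomotopyEquiv C D')) :
    ∃ (D : ChainComplex (ModuleCat (MonoidAlgebra ℤ Γ)) ℕ) (ι : D ⟶ C),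
      (∀ n, Function.Injective ⇑(ι.f n)) ∧
      (∀ n, d < n → Subsingleton (D.X n : Type _)) ∧
      (∀ n, n < d → IsIso (ι.f n)) ∧
      Module.Projective (MonoidAlgebra ℤ Γ) (D.X d) ∧
      Module.Finite (MonoidAlgebra ℤ Γ) (D.X d) ∧
      (∃ r : C.X d ⟶ D.X d, ι.f d ≫ r = 𝟙 (D.X d)) ∧
      ∃ e : HomotopyEquiv D C, e.hom = ι := by
  obtain ⟨D', hD'free, hD'dim, hE⟩ := hdim
  haveI := hfree d
  exact aux_trunc d C inferInstance (hfg d) ⟨D', hD'dim, hE⟩
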